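/- The function W_A(x) = 2·Σ_{i<j} ln(x_i - x_j) - ‖x‖²/2 on the open Weyl chamber {x ∈ ℝ^N : x_1 > x_2 > ... > x_N} attains its maximum at a point y if and only if y_i/2 = Σ_{j≠i} 1/(y_i - y_j) for all i = 1,...,N. -/

import Mathlib

open Finset

noncomputable def WA (N : ℕ) (x : Fin N → ℝ) : ℝ :=
  2 * ∑ i, ∑ j ∈ Finset.univ.filter (fun j => i < j), Real.log (x i - x j)
    - (∑ i, (x i) ^ 2) / 2

lemma pairSum {N : ℕ} (y d : Fin N → ℝ) :
    ∑ i, ∑ j ∈ Finset.univ.filter (fun j => i < j), (d i - d j) / (y i - y j)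
      = ∑ i, ∑ j ∈ Finset.univ.erase i, d i / (y i - y j) := by
  have h1 : ∀ i : Fin N, ∑ j ∈ Finset.univ.filter (fun j => i < j), (d i - d j) / (y i - y j)
      = (∑ j, if i < j then d i / (y i - y j) else 0)
        + ∑ j, if i < j then d j / (y j - y i) else 0 := by
    intro i
    rw [← Finset.sum_add_distrib, Finset.sum_filter]
    refine Finset.sum_congr rfl fun j _ => ?_
    by_cases h : i < j
    · simp only [h, if_true]
      rw [show y j - y i = -(y i - y j) by ring, div_neg, sub_div]
      ring
    · simp [h]
  simp only [h1, Finset.sum_add_distrib]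
  rw [Finset.sum_comm (f := fun i j => if i < j then d j / (y j - y i) else 0)]
  rw [← Finset.sum_add_distrib]
  refine Finset.sum_congr rfl fun i _ => ?_
  rw [← Finset.sum_add_distrib]
  have : ∑ j ∈ Finset.univ.erase i, d i / (y i - y j)
      = ∑ j, if j ∈ Finset.univ.erase i then d i / (y i - y j) else 0 := by
    rw [Finset.sum_ite_mem, Finset.univ_inter]
  rw [this]
  refine Finset.sum_congr rfl fun j _ => ?_
  rcases lt_trichotomy i j with h | h | h
  · simp [h, not_lt.2 h.le, Finset.mem_erase, h.ne']
  · simp [h, Finset.mem_erase]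
  · simp [h, not_lt.2 h.le, Finset.mem_erase, h.ne]

lemma hasDerivAt_WA {N : ℕ} (y : Fin N → ℝ) (hy : StrictAnti y) (d : Fin N → ℝ) :
    HasDerivAt (fun t => WA N (fun k => y k + t * d k))
      (2 * ∑ i, ∑ j ∈ Finset.univ.filter (fun j => i < j), (d i - d j) / (y i - y j)
        - ∑ i, y i * d i) 0 := by
  have hlin : ∀ k : Fin N, HasDerivAt (fun t : ℝ => y k + t * d k) (d k) 0 :=
    fun k => (hasDerivAt_mul_const (d k)).const_add (y k)
  have hlog : HasDerivAt
      (fun t : ℝ => ∑ i, ∑ j ∈ Finset.univ.filter (fun j => i < j),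
        Real.log ((y i + t * d i) - (y j + t * d j)))
      (∑ i, ∑ j ∈ Finset.univ.filter (fun j => i < j), (d i - d j) / (y i - y j)) 0 := by
    refine HasDerivAt.fun_sum fun i _ => HasDerivAt.fun_sum fun j hj => ?_
    have hij : i < j := by simpa using hj
    have hpos : 0 < y i - y j := sub_pos.2 (hy hij)
    have h0 : HasDerivAt (fun t : ℝ => (y i + t * d i) - (y j + t * d j)) (d i - d j) 0 :=
      (hlin i).sub (hlin j)
    have := h0.log (by simpa using hpos.ne')
    simpa using this
  have hsq : HasDerivAt (fun t : ℝ => ∑ i, (y i + t * d i) ^ 2)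
      (∑ i, 2 * (y i * d i)) 0 := by
    refine HasDerivAt.fun_sum fun i _ => ?_
    have := (hlin i).fun_pow 2
    simpa [mul_assoc] using this
  have H := ((hlog.const_mul 2).sub (hsq.div_const 2))
  have : (∑ i, 2 * (y i * d i)) / 2 = ∑ i, y i * d i := by
    rw [← Finset.mul_sum]; ring
  rw [this] at H
  exact H

lemma isOpen_chamber {N : ℕ} : IsOpen {x : Fin N → ℝ | StrictAnti x} := by
  have heq : {x : Fin N → ℝ | StrictAnti x}
      = ⋂ i, ⋂ j, {x : Fin N → ℝ | i < j → x j < x i} := by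
    ext x
    simp only [Set.mem_setOf_eq, Set.mem_iInter]
    exact ⟨fun h i j hij => h hij, fun h a b hab => h a b hab⟩
  rw [heq]
  refine isOpen_iInter_of_finite fun i => isOpen_iInter_of_finite fun j => ?_
  by_cases h : i < j
  · have : {x : Fin N → ℝ | i < j → x j < x i} = {x : Fin N → ℝ | x j < x i} := by
      ext x; simp [h]
    rw [this]
    exact isOpen_lt (continuous_apply j) (continuous_apply i)
  · have : {x : Fin N → ℝ | i < j → x j < x i} = Set.univ := by
      ext x; simp [h]
    rw [this]
    exact isOpen_univ

theorem stmt_1 (N : ℕ) (y : Fin N → ℝ) (hy : StrictAnti y) :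
    (∀ x : Fin N → ℝ, StrictAnti x → WA N x ≤ WA N y) ↔
      (∀ i, y i / 2 = ∑ j ∈ Finset.univ.erase i, 1 / (y i - y j)) := by
  constructor
  · -- max implies critical
    intro hmax i
    set d : Fin N → ℝ := fun k => if k = i then (1 : ℝ) else 0 with hd
    set φ : ℝ → ℝ := fun t => WA N (fun k => y k + t * d k) with hφ
    have hder := hasDerivAt_WA y hy d
    -- local max at 0
    have hcont : Continuous fun t : ℝ => (fun k => y k + t * d k : Fin N → ℝ) :=
      continuous_pi fun k => continuous_const.add (continuous_id.mul continuous_const)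
    have hmem : (fun k => y k + (0:ℝ) * d k) ∈ {x : Fin N → ℝ | StrictAnti x} := by
      simpa using hy
    have hnhds : {t : ℝ | StrictAnti (fun k => y k + t * d k)} ∈ nhds (0:ℝ) := by
      have := isOpen_chamber.preimage hcont
      exact this.mem_nhds hmem
    have hloc : IsLocalMax φ 0 := by
      filter_upwards [hnhds] with t ht
      have h0 : φ 0 = WA N y := by
        simp only [hφ]
        congr 1
        funext k; ring
      rw [h0]
      exact hmax _ ht
    have hzero : (2 * ∑ a, ∑ b ∈ Finset.univ.filter (fun b => a < b), (d a - d b) / (y a - y b)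
        - ∑ a, y a * d a) = 0 := by
      rw [← hder.deriv]
      exact hloc.deriv_eq_zero
    rw [pairSum] at hzero
    have h1 : ∑ a, ∑ b ∈ Finset.univ.erase a, d a / (y a - y b)
        = ∑ b ∈ Finset.univ.erase i, 1 / (y i - y b) := by
      rw [Finset.sum_eq_single i]
      · simp [hd]
      · intro a _ ha
        simp [hd, ha]
      · simp
    have h2 : ∑ a, y a * d a = y i := by
      rw [Finset.sum_eq_single i]
      · simp [hd]
      · intro a _ ha; simp [hd, ha]
      · simp
    rw [h1, h2] at hzero
    linarith
  · -- critical implies max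
    intro hcrit x hx
    set d : Fin N → ℝ := fun k => x k - y k with hd
    set ψ : ℝ → ℝ := fun t => WA N (fun k => y k + t * d k) with hψ
    have hD : (2 * ∑ a, ∑ b ∈ Finset.univ.filter (fun b => a < b), (d a - d b) / (y a - y b)
        - ∑ a, y a * d a) = 0 := by
      rw [pairSum]
      have : ∀ a : Fin N, ∑ b ∈ Finset.univ.erase a, d a / (y a - y b)
          = d a * (y a / 2) := by
        intro a
        rw [show ∑ b ∈ Finset.univ.erase a, d a / (y a - y b)
            = d a * ∑ b ∈ Finset.univ.erase a, 1 / (y a - y b) by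
          rw [Finset.mul_sum]; exact Finset.sum_congr rfl fun b _ => by ring]
        rw [← hcrit a]
      simp only [this]
      rw [Finset.mul_sum, ← Finset.sum_sub_distrib]
      refine Finset.sum_eq_zero fun a _ => by ring
    have hder : HasDerivAt ψ 0 0 := hD ▸ hasDerivAt_WA y hy d
    have htend : Filter.Tendsto (slope ψ 0) (nhdsWithin 0 (Set.Ioi 0)) (nhds 0) := by
      have := hasDerivAt_iff_tendsto_slope.1 hder
      exact this.mono_left (nhdsWithin_mono 0 fun t ht => (Set.mem_Ioi.1 ht).ne')
    have hψ0 : ψ 0 = WA N y := by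
      simp only [hψ]; congr 1; funext k; ring
    have key : ∀ᶠ t in nhdsWithin 0 (Set.Ioi 0), WA N x - WA N y ≤ slope ψ 0 t := by
      filter_upwards [Ioo_mem_nhdsGT_of_mem (Set.mem_Ico.2 ⟨le_refl 0, one_pos⟩)] with t ht
      obtain ⟨ht0, ht1⟩ := ht
      set z : Fin N → ℝ := fun k => y k + t * d k with hz
      have hzanti : StrictAnti z := by
        intro a b hab
        have h1 := hy hab
        have h2 := hx hab
        simp only [hz, hd]
        nlinarith [mul_pos ht0 (sub_pos.2 h2), mul_pos (sub_pos.2 ht1) (sub_pos.2 h1)]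
      -- concavity inequality
      have Llog : (1 - t) * (∑ i, ∑ j ∈ Finset.univ.filter (fun j => i < j),
            Real.log (y i - y j))
          + t * (∑ i, ∑ j ∈ Finset.univ.filter (fun j => i < j), Real.log (x i - x j))
          ≤ ∑ i, ∑ j ∈ Finset.univ.filter (fun j => i < j), Real.log (z i - z j) := by
        rw [Finset.mul_sum, Finset.mul_sum, ← Finset.sum_add_distrib]
        refine Finset.sum_le_sum fun i _ => ?_
        rw [Finset.mul_sum, Finset.mul_sum, ← Finset.sum_add_distrib]
        refine Finset.sum_le_sum fun j hj => ?_
        have hij : i < j := by simpa using hj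
        have hy' : (0:ℝ) < y i - y j := sub_pos.2 (hy hij)
        have hx' : (0:ℝ) < x i - x j := sub_pos.2 (hx hij)
        have hcc := (strictConcaveOn_log_Ioi.concaveOn).2 (Set.mem_Ioi.2 hy')
          (Set.mem_Ioi.2 hx') (by linarith : (0:ℝ) ≤ 1 - t) ht0.le (by ring)
        simp only [smul_eq_mul] at hcc
        calc (1 - t) * Real.log (y i - y j) + t * Real.log (x i - x j)
            ≤ Real.log ((1 - t) * (y i - y j) + t * (x i - x j)) := hcc
          _ = Real.log (z i - z j) := by
              congr 1; simp only [hz, hd]; ring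
      have Lsq : ∑ i, (z i) ^ 2 ≤ (1 - t) * (∑ i, (y i) ^ 2) + t * (∑ i, (x i) ^ 2) := by
        rw [Finset.mul_sum, Finset.mul_sum, ← Finset.sum_add_distrib]
        refine Finset.sum_le_sum fun i _ => ?_
        have hcv := (Even.convexOn_pow (even_two) (𝕜 := ℝ)).2 (Set.mem_univ (y i))
          (Set.mem_univ (x i)) (by linarith : (0:ℝ) ≤ 1 - t) ht0.le (by ring)
        simp only [smul_eq_mul] at hcv
        calc (z i) ^ 2 = ((1 - t) * y i + t * x i) ^ 2 := by
              congr 1; simp only [hz, hd]; ring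
          _ ≤ (1 - t) * (y i) ^ 2 + t * (x i) ^ 2 := hcv
      have hconc : (1 - t) * WA N y + t * WA N x ≤ WA N z := by
        simp only [WA]
        nlinarith [Llog, Lsq]
      have hst : slope ψ 0 t = (WA N z - WA N y) / t := by
        rw [slope_def_field, hψ0, sub_zero]
      rw [hst, le_div_iff₀ ht0]
      nlinarith [hconc]
    have := ge_of_tendsto htend key
    linarith
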